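/- arXiv:1304.7997 — 2 statements merged into one kernel-verified Lean document; each statement's English description precedes it below -/
import Mathlib

section
/- The Grundy value of the odd/odd vertex removal game on a grid graph is either 0 or 1. -/
open scoped Classical

/-- minimal excludant of a set of naturals -/
noncomputable def mexN (s : Set ℕ) : ℕ := sInf {n | n ∉ s}

/-- delete a vertex's incident edges (the vertex becomes isolated) -/
def delVert {V : Type*} (G : SimpleGraph V) (v : V) : SimpleGraph V where
  Adj a b := G.Adj a b ∧ a ≠ v ∧ b ≠ v
  symm := ⟨fun a b h => ⟨h.1.symm, h.2.2, h.2.1⟩⟩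
  loopless := ⟨fun a h => G.loopless.irrefl a h.1⟩

lemma delVert_le {V : Type*} (G : SimpleGraph V) (v : V) : delVert G v ≤ G := fun _ _ h => h.1

noncomputable def edgeCard {V : Type*} [Fintype V] (G : SimpleGraph V) : ℕ := G.edgeFinset.card

lemma edgeCard_lt {V : Type*} [Fintype V] (G : SimpleGraph V) {v : V} (h : Odd (G.degree v)) :
    edgeCard (delVert G v) < edgeCard G := by
  apply Finset.card_lt_card
  rw [Finset.ssubset_iff_of_subset (SimpleGraph.edgeFinset_subset_edgeFinset.2 (delVert_le G v))]
  obtain ⟨w, hw⟩ := (G.degree_pos_iff_exists_adj v).1 h.pos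
  refine ⟨s(v, w), ?_, ?_⟩
  · simpa [SimpleGraph.mem_edgeFinset] using hw
  · intro hc
    have := SimpleGraph.mem_edgeFinset.1 hc
    rw [SimpleGraph.mem_edgeSet] at this
    exact this.2.1 rfl

noncomputable def grundy {V : Type*} [Fintype V] (G : SimpleGraph V) : ℕ :=
  mexN {n | ∃ v : {v : V // Odd (G.degree v)}, grundy (delVert G v.1) = n}
termination_by edgeCard G
decreasing_by exact edgeCard_lt G v.2


section Aux
variable {V : Type*} [Fintype V]

lemma mexN_eq_zero {s : Set ℕ} (h : 0 ∉ s) : mexN s = 0 :=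
  Nat.sInf_eq_zero.mpr (Or.inl h)

lemma mexN_eq_one {s : Set ℕ} (h0 : 0 ∈ s) (h1 : 1 ∉ s) : mexN s = 1 := by
  have h1' : 1 ∈ {n | n ∉ s} := h1
  refine le_antisymm (Nat.sInf_le h1') ?_
  rcases Nat.eq_zero_or_pos (sInf {n | n ∉ s}) with h | h
  · rcases Nat.sInf_eq_zero.mp h with h' | h'
    · exact absurd h0 h'
    · exact absurd h1' (by simp [h'])
  · exact h

lemma delVert_edgeFinset (G : SimpleGraph V) (v : V) :
    (delVert G v).edgeFinset = G.edgeFinset \ G.incidenceFinset v := by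
  classical
  ext e
  induction e using Sym2.ind with
  | _ a b =>
    simp only [SimpleGraph.mem_edgeFinset, Finset.mem_sdiff, SimpleGraph.mem_incidenceFinset,
      SimpleGraph.incidenceSet, Set.mem_setOf_eq, SimpleGraph.mem_edgeSet, Sym2.mem_iff,
      Set.mem_sep_iff]
    simp only [delVert]
    constructor
    · rintro ⟨h, h1, h2⟩
      refine ⟨h, ?_⟩
      rintro ⟨-, (rfl | rfl)⟩
      · exact h1 rfl
      · exact h2 rfl
    · rintro ⟨h, h2⟩
      refine ⟨h, ?_, ?_⟩ <;> rintro rfl <;> exact h2 ⟨h, by simp⟩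

lemma incidenceFinset_subset' (G : SimpleGraph V) (v : V) :
    G.incidenceFinset v ⊆ G.edgeFinset := by
  classical
  intro e he
  rw [SimpleGraph.mem_incidenceFinset] at he
  exact SimpleGraph.mem_edgeFinset.mpr he.1

lemma edgeCard_delVert (G : SimpleGraph V) (v : V) :
    edgeCard (delVert G v) = edgeCard G - G.degree v := by
  classical
  rw [edgeCard, delVert_edgeFinset, Finset.card_sdiff_of_subset (incidenceFinset_subset' G v),
    SimpleGraph.card_incidenceFinset_eq_degree, edgeCard]

lemma degree_le_edgeCard (G : SimpleGraph V) (v : V) : G.degree v ≤ edgeCard G := by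
  classical
  rw [← SimpleGraph.card_incidenceFinset_eq_degree]
  exact Finset.card_le_card (incidenceFinset_subset' G v)

lemma even_edgeCard (G : SimpleGraph V) (c : V → Fin 2)
    (hc : ∀ a b, G.Adj a b → c a ≠ c b) (hd : ∀ v, ¬ Odd (G.degree v)) :
    edgeCard G % 2 = 0 := by
  classical
  have key : G.edgeFinset
      = (Finset.univ.filter (fun v => c v = 0)).biUnion (fun v => G.incidenceFinset v) := by
    ext e
    induction e using Sym2.ind with
    | _ a b =>
      simp only [Finset.mem_biUnion, Finset.mem_filter, Finset.mem_univ, true_and,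
        SimpleGraph.mem_incidenceFinset, SimpleGraph.incidenceSet, Set.mem_sep_iff,
        SimpleGraph.mem_edgeSet, SimpleGraph.mem_edgeFinset, Sym2.mem_iff]
      constructor
      · intro h
        have hne := hc a b h
        rcases (by omega : (c a).val = 0 ∨ (c b).val = 0) with h0 | h0
        · exact ⟨a, Fin.ext h0, h, Or.inl rfl⟩
        · exact ⟨b, Fin.ext h0, h, Or.inr rfl⟩
      · rintro ⟨w, -, hw, -⟩; exact hw
  have hdisj : ∀ u ∈ Finset.univ.filter (fun v => c v = 0),
      ∀ w ∈ Finset.univ.filter (fun v => c v = 0), u ≠ w →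
      Disjoint (G.incidenceFinset u) (G.incidenceFinset w) := by
    intro u hu w hw huw
    rw [Finset.mem_filter] at hu hw
    rw [Finset.disjoint_left]
    intro e heu hew
    rw [SimpleGraph.mem_incidenceFinset] at heu hew
    induction e using Sym2.ind with
    | _ a b =>
      obtain ⟨hab, hu'⟩ := heu
      obtain ⟨-, hw'⟩ := hew
      rw [SimpleGraph.mem_edgeSet] at hab
      rw [Sym2.mem_iff] at hu' hw'
      have hadj : G.Adj u w := by
        rcases hu' with rfl | rfl <;> rcases hw' with rfl | rfl
        · exact absurd rfl huw
        · exact hab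
        · exact hab.symm
        · exact absurd rfl huw
      exact hc u w hadj (hu.2.trans hw.2.symm)
  rw [edgeCard, key, Finset.card_biUnion hdisj, Finset.sum_nat_mod]
  have : ∀ v ∈ Finset.univ.filter (fun v => c v = 0),
      (G.incidenceFinset v).card % 2 = 0 := by
    intro v _
    rw [SimpleGraph.card_incidenceFinset_eq_degree]
    have := hd v
    rw [Nat.not_odd_iff_even, Nat.even_iff] at this
    exact this
  rw [Finset.sum_congr rfl this]
  simp

end Aux

lemma grundy_parity (N : ℕ) : ∀ {V : Type*} [Fintype V] (G : SimpleGraph V),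
    edgeCard G ≤ N → ∀ (c : V → Fin 2), (∀ a b, G.Adj a b → c a ≠ c b) →
    grundy G = edgeCard G % 2 := by
  induction N with
  | zero =>
    intro V _ G hN c hc
    rw [grundy, mexN_eq_zero]
    · omega
    · rintro ⟨⟨v, hv⟩, -⟩
      have := degree_le_edgeCard G v
      have := hv.pos
      omega
  | succ N ih =>
    intro V _ G hN c hc
    have hc' : ∀ (v : V), ∀ a b, (delVert G v).Adj a b → c a ≠ c b :=
      fun v a b h => hc a b (delVert_le G v h)
    have key : ∀ (v : V), Odd (G.degree v) →
        grundy (delVert G v) = (edgeCard G + 1) % 2 := by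
      intro v hv
      have hlt := edgeCard_lt G hv
      have h1 := ih (delVert G v) (by omega) c (hc' v)
      rw [h1, edgeCard_delVert]
      have hle := degree_le_edgeCard G v
      obtain ⟨k, hk⟩ := hv
      omega
    rw [grundy]
    rcases Nat.even_or_odd (edgeCard G) with he | ho
    · rw [Nat.even_iff] at he
      rw [mexN_eq_zero]
      · omega
      · rintro ⟨⟨v, hv⟩, hg⟩
        rw [key v hv] at hg
        omega
    · have hex : ∃ v : V, Odd (G.degree v) := by
        by_contra h
        push_neg at h
        have := even_edgeCard G c hc (by simpa using h)
        rw [Nat.odd_iff] at ho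
        omega
      obtain ⟨v, hv⟩ := hex
      rw [Nat.odd_iff] at ho
      rw [mexN_eq_one, ho]
      · exact ⟨⟨v, hv⟩, by rw [key v hv]; omega⟩
      · rintro ⟨⟨w, hw⟩, hg⟩
        rw [key w hw] at hg
        omega


open Fin.NatCast in
/-- The Grundy value of the odd/odd vertex removal game on a grid graph
(the box product of two paths) is either 0 or 1. -/
theorem grundy_grid (m n : ℕ) :
    grundy (SimpleGraph.pathGraph m □ SimpleGraph.pathGraph n) = 0 ∨
      grundy (SimpleGraph.pathGraph m □ SimpleGraph.pathGraph n) = 1 := by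
  set G := SimpleGraph.pathGraph m □ SimpleGraph.pathGraph n with hG
  have hc : ∀ a b : Fin m × Fin n, G.Adj a b →
      (fun p : Fin m × Fin n => ((p.1.val + p.2.val : ℕ) : Fin 2)) a ≠
      (fun p : Fin m × Fin n => ((p.1.val + p.2.val : ℕ) : Fin 2)) b := by
    rintro ⟨a1, a2⟩ ⟨b1, b2⟩ hab heq
    rw [hG, SimpleGraph.boxProd_adj] at hab
    replace heq : (a1.val + a2.val) % 2 = (b1.val + b2.val) % 2 := congrArg Fin.val heq
    rcases hab with ⟨h, h'⟩ | ⟨h, h'⟩ <;>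
      · simp only [SimpleGraph.pathGraph_adj, Fin.ext_iff] at h h'
        omega
  have := grundy_parity (edgeCard G) G le_rfl _ hc
  omega
end

section
/- Let G_0, ..., G_K be finite graphs, each having at least two odd-degree vertices, and form G by taking their disjoint union, adding new vertices v_0, ..., v_K (with an extra auxiliary pair v_{-1}, P_3 when K is even so that the number of new vertices is even), joining each v_i to all odd-degree vertices of G_i, and joining all v_i pairwise by a complete graph. Then in G the only odd-degree vertices are the v_i, and deleting v_i from G yields a position whose Grundy value equals that of G_i; consequently g(G) = mex{g(G_i)}. -/
open scoped Classical

lemma delVert_adj {V : Type*} (G : SimpleGraph V) (v a b : V) :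
    (delVert G v).Adj a b ↔ G.Adj a b ∧ a ≠ v ∧ b ≠ v := Iff.rfl

lemma delVert_neighborFinset {V : Type*} [Fintype V] (G : SimpleGraph V) (v w : V)
    (hwv : w ≠ v) : (delVert G v).neighborFinset w = (G.neighborFinset w).erase v := by
  ext u
  simp only [SimpleGraph.mem_neighborFinset, Finset.mem_erase, delVert_adj]
  constructor
  · rintro ⟨h, _, h2⟩; exact ⟨h2, h⟩
  · rintro ⟨h2, h⟩; exact ⟨h, hwv, h2⟩

lemma delVert_degree_self {V : Type*} [Fintype V] (G : SimpleGraph V) (v : V) :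
    (delVert G v).degree v = 0 := by
  have h : (delVert G v).neighborFinset v = ∅ := by
    ext u
    simp only [SimpleGraph.mem_neighborFinset, delVert_adj, Finset.notMem_empty, iff_false]
    rintro ⟨_, h2, _⟩
    exact h2 rfl
  simp [SimpleGraph.degree, h]

lemma delVert_degree_of_not_adj {V : Type*} [Fintype V] (G : SimpleGraph V) (v w : V)
    (hwv : w ≠ v) (h : ¬ G.Adj w v) : (delVert G v).degree w = G.degree w := by
  rw [SimpleGraph.degree, SimpleGraph.degree, delVert_neighborFinset G v w hwv,
    Finset.erase_eq_of_notMem (by simpa [SimpleGraph.mem_neighborFinset] using h)]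

theorem grundy_eq_of_embed {W V : Type*} [Fintype W] [Fintype V]
    (H : SimpleGraph W) (G : SimpleGraph V) (e : W ↪ V)
    (hadj : ∀ a b, G.Adj (e a) (e b) ↔ H.Adj a b)
    (hcross : ∀ (a : W) (v : V), v ∉ Set.range e → ¬ G.Adj (e a) v)
    (heven : ∀ v : V, v ∉ Set.range e → Even (G.degree v)) :
    grundy G = grundy H := by
  have hnbr : ∀ a : W, G.neighborFinset (e a) = (H.neighborFinset a).map e := by
    intro a; ext v
    simp only [SimpleGraph.mem_neighborFinset, Finset.mem_map]
    constructor
    · intro h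
      by_cases hv : v ∈ Set.range e
      · obtain ⟨b, rfl⟩ := hv
        exact ⟨b, (hadj a b).1 h, rfl⟩
      · exact absurd h (hcross a v hv)
    · rintro ⟨b, hb, rfl⟩; exact (hadj a b).2 hb
  have hdeg : ∀ a : W, G.degree (e a) = H.degree a := by
    intro a; rw [SimpleGraph.degree, SimpleGraph.degree, hnbr, Finset.card_map]
  have key : ∀ a : W, Odd (H.degree a) →
      grundy (delVert G (e a)) = grundy (delVert H a) := by
    intro a ha
    apply grundy_eq_of_embed (delVert H a) (delVert G (e a)) e
    · intro b c
      rw [delVert_adj, delVert_adj, hadj]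
      simp [e.injective.ne_iff]
    · intro b v hv
      rw [delVert_adj]
      exact fun h => hcross b v hv h.1
    · intro v hv
      have hne : v ≠ e a := fun h => hv ⟨a, h.symm⟩
      rw [delVert_degree_of_not_adj G (e a) v hne
          (fun h => hcross a v hv h.symm)]
      exact heven v hv
  have hodd : ∀ v : V, Odd (G.degree v) → ∃ a : W, e a = v ∧ Odd (H.degree a) := by
    intro v hv
    by_cases h : v ∈ Set.range e
    · obtain ⟨a, rfl⟩ := h; exact ⟨a, rfl, by rwa [hdeg] at hv⟩
    · exact absurd hv (Nat.not_odd_iff_even.2 (heven v h))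
  rw [grundy, grundy]
  congr 1
  ext n
  simp only [Set.mem_setOf_eq]
  constructor
  · rintro ⟨⟨v, hv⟩, rfl⟩
    obtain ⟨a, rfl, ha⟩ := hodd v hv
    exact ⟨⟨a, ha⟩, (key a ha).symm⟩
  · rintro ⟨⟨a, ha⟩, rfl⟩
    exact ⟨⟨e a, by rw [hdeg]; exact ha⟩, key a ha⟩
termination_by edgeCard G
decreasing_by exact edgeCard_lt G (by rw [hdeg]; exact ha)

lemma delVert_degree_of_adj {V : Type*} [Fintype V] (G : SimpleGraph V) (v w : V)
    (hwv : w ≠ v) (h : G.Adj w v) : (delVert G v).degree w = G.degree w - 1 := by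
  rw [SimpleGraph.degree, SimpleGraph.degree, delVert_neighborFinset G v w hwv,
    Finset.card_erase_of_mem (by simpa [SimpleGraph.mem_neighborFinset] using h)]

/-- Ottaway-style construction: given a family of graphs `Gs i` (`i : ι`),
take their disjoint union, add one new vertex `vᵢ` for each index `i`,
join `vᵢ` to all odd-degree vertices of `Gs i`, and join the new vertices
pairwise by a complete graph. -/
def bigGraph {ι : Type} [Fintype ι] [DecidableEq ι]
    (Vt : ι → Type) [∀ i, Fintype (Vt i)] (Gs : ∀ i, SimpleGraph (Vt i)) :
    SimpleGraph ((Σ i, Vt i) ⊕ ι) where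
  Adj x y :=
    match x, y with
    | Sum.inl ⟨i, a⟩, Sum.inl ⟨j, b⟩ => ∃ h : i = j, (Gs j).Adj (h ▸ a) b
    | Sum.inl ⟨i, a⟩, Sum.inr j => i = j ∧ Odd ((Gs i).degree a)
    | Sum.inr j, Sum.inl ⟨i, a⟩ => i = j ∧ Odd ((Gs i).degree a)
    | Sum.inr i, Sum.inr j => i ≠ j
  symm := by
    constructor
    rintro (⟨i, a⟩ | i) (⟨j, b⟩ | j) h
    · obtain ⟨rfl, had⟩ := h
      exact ⟨rfl, had.symm⟩
    · exact h
    · exact h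
    · exact h.symm
  loopless := by
    constructor
    rintro (⟨i, a⟩ | i) h
    · obtain ⟨_, had⟩ := h
      exact (Gs i).loopless.irrefl a had
    · exact h rfl


section Big

variable {ι : Type} [Fintype ι] [DecidableEq ι]
  {Vt' : ι → Type} [∀ i, Fintype (Vt' i)] (Gs' : ∀ i, SimpleGraph (Vt' i))

lemma bigGraph_adj_inl_inl {i j : ι} {a : Vt' i} {b : Vt' j} :
    (bigGraph Vt' Gs').Adj (Sum.inl ⟨i, a⟩) (Sum.inl ⟨j, b⟩) ↔
      ∃ h : i = j, (Gs' j).Adj (h ▸ a) b := Iff.rfl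

lemma bigGraph_adj_inl_inr {i j : ι} {a : Vt' i} :
    (bigGraph Vt' Gs').Adj (Sum.inl ⟨i, a⟩) (Sum.inr j) ↔
      i = j ∧ Odd ((Gs' i).degree a) := Iff.rfl

lemma bigGraph_adj_inr_inl {i j : ι} {b : Vt' j} :
    (bigGraph Vt' Gs').Adj (Sum.inr i) (Sum.inl ⟨j, b⟩) ↔
      j = i ∧ Odd ((Gs' j).degree b) := Iff.rfl

lemma bigGraph_adj_inr_inr {i j : ι} :
    (bigGraph Vt' Gs').Adj (Sum.inr i) (Sum.inr j) ↔ i ≠ j := Iff.rfl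

lemma bigGraph_adj_inl_inl_same {i : ι} {a b : Vt' i} :
    (bigGraph Vt' Gs').Adj (Sum.inl ⟨i, a⟩) (Sum.inl ⟨i, b⟩) ↔ (Gs' i).Adj a b := by
  rw [bigGraph_adj_inl_inl]
  constructor
  · rintro ⟨h, had⟩
    exact had
  · intro h
    exact ⟨rfl, h⟩

lemma inlEmb_inj (i : ι) :
    Function.Injective (fun b : Vt' i => (Sum.inl ⟨i, b⟩ : (Σ j, Vt' j) ⊕ ι)) := by
  intro x y h; simpa using h

def inlEmb (i : ι) : Vt' i ↪ ((Σ j, Vt' j) ⊕ ι) :=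
  ⟨fun b => Sum.inl ⟨i, b⟩, inlEmb_inj i⟩

lemma bigGraph_even_degree_inl (i : ι) (a : Vt' i) :
    Even ((bigGraph Vt' Gs').degree (Sum.inl ⟨i, a⟩)) := by
  have hnbr : (bigGraph Vt' Gs').neighborFinset (Sum.inl ⟨i, a⟩) =
      ((Gs' i).neighborFinset a).map (inlEmb i) ∪
        (if Odd ((Gs' i).degree a) then {Sum.inr i} else ∅) := by
    ext x
    simp only [SimpleGraph.mem_neighborFinset, Finset.mem_union, Finset.mem_map, inlEmb,
      Function.Embedding.coeFn_mk]
    rcases x with ⟨j, b⟩ | j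
    · rw [bigGraph_adj_inl_inl]
      constructor
      · rintro ⟨rfl, had⟩
        exact Or.inl ⟨b, had, rfl⟩
      · rintro (⟨b', hb', hEq⟩ | hmem)
        · simp only [Sum.inl.injEq, Sigma.mk.inj_iff] at hEq
          obtain ⟨rfl, hb⟩ := hEq
          obtain rfl := eq_of_heq hb
          exact ⟨rfl, hb'⟩
        · revert hmem; split <;> simp
    · rw [bigGraph_adj_inl_inr]
      by_cases hoa : Odd ((Gs' i).degree a) <;> simp [hoa, eq_comm]
  have hdisj : Disjoint (((Gs' i).neighborFinset a).map (inlEmb i))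
      (if Odd ((Gs' i).degree a) then ({Sum.inr i} : Finset _) else ∅) := by
    rw [Finset.disjoint_left]
    intro x hx
    simp only [Finset.mem_map, inlEmb, Function.Embedding.coeFn_mk] at hx
    obtain ⟨b, _, rfl⟩ := hx
    split <;> simp
  rw [SimpleGraph.degree, hnbr, Finset.card_union_of_disjoint hdisj, Finset.card_map]
  by_cases hoa : Odd ((Gs' i).degree a)
  · simpa [hoa] using hoa.add_one
  · simpa [hoa] using Nat.not_odd_iff_even.1 hoa

lemma bigGraph_degree_inr (i : ι) :
    (bigGraph Vt' Gs').degree (Sum.inr i) =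
      (Finset.univ.filter fun b : Vt' i => Odd ((Gs' i).degree b)).card +
        (Fintype.card ι - 1) := by
  have hnbr : (bigGraph Vt' Gs').neighborFinset (Sum.inr i) =
      ((Finset.univ.filter fun b : Vt' i => Odd ((Gs' i).degree b)).map (inlEmb i)) ∪
        ((Finset.univ.erase i).map ⟨Sum.inr, Sum.inr_injective⟩) := by
    ext x
    simp only [SimpleGraph.mem_neighborFinset, Finset.mem_union, Finset.mem_map, inlEmb,
      Function.Embedding.coeFn_mk, Finset.mem_filter, Finset.mem_univ, true_and,
      Finset.mem_erase]
    rcases x with ⟨j, b⟩ | j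
    · rw [bigGraph_adj_inr_inl]
      constructor
      · rintro ⟨rfl, hb⟩
        exact Or.inl ⟨b, hb, rfl⟩
      · rintro (⟨b', hb', hEq⟩ | ⟨_, _, h⟩)
        · simp only [Sum.inl.injEq, Sigma.mk.inj_iff] at hEq
          obtain ⟨rfl, hb⟩ := hEq
          obtain rfl := eq_of_heq hb
          exact ⟨rfl, hb'⟩
        · exact absurd h (by simp)
    · rw [bigGraph_adj_inr_inr]
      simp [ne_comm]
  have hdisj : Disjoint
      (((Finset.univ.filter fun b : Vt' i => Odd ((Gs' i).degree b)).map (inlEmb i)))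
      ((Finset.univ.erase i).map ⟨Sum.inr, Sum.inr_injective⟩) := by
    rw [Finset.disjoint_left]
    intro x hx
    simp only [Finset.mem_map, inlEmb, Function.Embedding.coeFn_mk] at hx
    obtain ⟨b, _, rfl⟩ := hx
    simp
  rw [SimpleGraph.degree, hnbr, Finset.card_union_of_disjoint hdisj, Finset.card_map,
    Finset.card_map, Finset.card_erase_of_mem (Finset.mem_univ i), Finset.card_univ]

lemma bigGraph_odd_degree_inr (hcard : Even (Fintype.card ι)) (i : ι) :
    Odd ((bigGraph Vt' Gs').degree (Sum.inr i)) := by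
  rw [bigGraph_degree_inr]
  have h1 : Even (Finset.univ.filter fun b : Vt' i => Odd ((Gs' i).degree b)).card :=
    SimpleGraph.even_card_odd_degree_vertices (Gs' i)
  have hpos : 1 ≤ Fintype.card ι := @Fintype.card_pos ι _ ⟨i⟩
  exact h1.add_odd (Nat.Even.sub_odd hpos hcard odd_one)

end Big

section Big2

variable {ι : Type} [Fintype ι] [DecidableEq ι]
  {Vt' : ι → Type} [∀ i, Fintype (Vt' i)] (Gs' : ∀ i, SimpleGraph (Vt' i))

lemma grundy_delVert_inr (hcard : Even (Fintype.card ι)) (i : ι) :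
    grundy (delVert (bigGraph Vt' Gs') (Sum.inr i)) = grundy (Gs' i) := by
  apply grundy_eq_of_embed (Gs' i) _ (inlEmb i)
  · intro a b
    rw [delVert_adj]
    simp only [inlEmb, Function.Embedding.coeFn_mk]
    rw [bigGraph_adj_inl_inl_same]
    simp
  · intro a v hv
    rw [delVert_adj]
    rintro ⟨hadj, -, hne⟩
    rcases v with ⟨j, b⟩ | j
    · obtain ⟨rfl, -⟩ := (bigGraph_adj_inl_inl Gs').1 hadj
      exact hv ⟨b, rfl⟩
    · obtain ⟨rfl, -⟩ := (bigGraph_adj_inl_inr Gs').1 hadj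
      exact hne rfl
  · intro v hv
    rcases v with ⟨j, b⟩ | j
    · have hji : j ≠ i := by
        rintro rfl
        exact hv ⟨b, rfl⟩
      rw [delVert_degree_of_not_adj _ _ _ (by simp) (by
        rw [bigGraph_adj_inl_inr]
        rintro ⟨rfl, -⟩
        exact hji rfl)]
      exact bigGraph_even_degree_inl Gs' j b
    · by_cases hji : j = i
      · subst hji
        rw [delVert_degree_self]
        exact Even.zero
      · rw [delVert_degree_of_adj _ _ _ (by simp [hji]) (by
          rw [bigGraph_adj_inr_inr]
          exact hji)]
        exact Nat.Odd.sub_odd (bigGraph_odd_degree_inr Gs' hcard j) odd_one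

lemma bigGraph_odd_iff (hcard : Even (Fintype.card ι)) (x : (Σ j, Vt' j) ⊕ ι) :
    Odd ((bigGraph Vt' Gs').degree x) ↔ ∃ i : ι, x = Sum.inr i := by
  rcases x with ⟨i, a⟩ | i
  · simp only [← Nat.not_even_iff_odd, bigGraph_even_degree_inl Gs' i a, not_true,
      false_iff]
    rintro ⟨j, h⟩
    exact absurd h (by simp)
  · simp only [bigGraph_odd_degree_inr Gs' hcard i, true_iff]
    exact ⟨i, rfl⟩

lemma grundy_bigGraph_eq (hcard : Even (Fintype.card ι)) :
    grundy (bigGraph Vt' Gs') = mexN {n | ∃ i : ι, grundy (Gs' i) = n} := by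
  rw [grundy]
  congr 1
  ext n
  simp only [Set.mem_setOf_eq]
  constructor
  · rintro ⟨⟨v, hv⟩, rfl⟩
    obtain ⟨i, rfl⟩ := (bigGraph_odd_iff Gs' hcard v).1 hv
    exact ⟨i, (grundy_delVert_inr Gs' hcard i).symm⟩
  · rintro ⟨i, rfl⟩
    exact ⟨⟨Sum.inr i, bigGraph_odd_degree_inr Gs' hcard i⟩, grundy_delVert_inr Gs' hcard i⟩

end Big2

/-- Let `G₀, …, G_K` be finite graphs, each with at least two odd-degree
vertices.  Augment the family by a copy of `P₃` when `K` is even, so that the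
total number of new vertices is even, and form `G` by the construction
`bigGraph`: disjoint union of all the graphs, one new vertex `vᵢ` for each
graph joined to its odd-degree vertices, the new vertices joined pairwise.
Then the odd-degree vertices of `G` are exactly the `vᵢ`, deleting `vᵢ`
yields a position with Grundy value `g(Gᵢ)`, and consequently
`g(G) = mex {g(Gᵢ)}`. -/
theorem grundy_bigGraph (K : ℕ) (Vt : Fin (K + 1) → Type)
    [∀ i, Fintype (Vt i)] (Gs : ∀ i, SimpleGraph (Vt i))
    (hodd : ∀ i, ∃ a b : Vt i, a ≠ b ∧
      Odd ((Gs i).degree a) ∧ Odd ((Gs i).degree b)) :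
    -- the (possibly) extended index set and family, with an auxiliary `P₃`
    -- added exactly when `K` is even:
    ∀ (ι : Type) (e : ι ≃ (Fin (K + 1) ⊕ Fin (if Even K then 1 else 0))),
    ∀ (_ : Fintype ι) (_ : DecidableEq ι),
    ∀ (Vt' : ι → Type) (_ : ∀ i, Fintype (Vt' i))
      (Gs' : ∀ i, SimpleGraph (Vt' i))
      (hVt' : ∀ i, Vt' i = Sum.elim Vt (fun _ => Fin 3) (e i))
      (hGs' : ∀ i, HEq (Gs' i) (Sum.rec (motive := fun s =>
          SimpleGraph (Sum.elim Vt (fun _ => Fin 3) s))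
          (fun j => Gs j) (fun _ => SimpleGraph.pathGraph 3) (e i))),
      (∀ x : (Σ i, Vt' i) ⊕ ι,
          Odd ((bigGraph Vt' Gs').degree x) ↔ ∃ i : ι, x = Sum.inr i) ∧
      (∀ i : ι, grundy (delVert (bigGraph Vt' Gs') (Sum.inr i)) =
          grundy (Gs' i)) ∧
      grundy (bigGraph Vt' Gs') = mexN {n | ∃ i : ι, grundy (Gs' i) = n} := by
  intro ι e hF hD Vt' hFV Gs' _hVt' _hGs'
  have hcard : Even (Fintype.card ι) := by
    rw [Fintype.card_congr e]
    rcases Nat.even_or_odd K with hK | hK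
    · simp only [Fintype.card_sum, Fintype.card_fin, if_pos hK]
      exact hK.add even_two
    · simp only [Fintype.card_sum, Fintype.card_fin,
        if_neg (Nat.not_even_iff_odd.2 hK), Nat.add_zero]
      exact hK.add_one
  exact ⟨fun x => bigGraph_odd_iff Gs' hcard x,
    fun i => grundy_delVert_inr Gs' hcard i,
    grundy_bigGraph_eq Gs' hcard⟩
end
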